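/- arXiv:1508.03010 — 2 statements merged into one kernel-verified Lean document; each statement's English description precedes it below -/
import Mathlib

section
/- Pieri rule for elementary symmetric polynomials: for a partition λ with at most k parts and m ≤ k, the product s_λ · e_m in k variables equals the sum of s_μ over all partitions μ obtained from λ by adding m boxes with no two added boxes in the same row. -/
open MvPolynomial

/-- The alternant `a_{μ+δ}`; the Schur polynomial `s_μ` in `k` variables is
`a_{μ+δ} / a_δ`. -/
noncomputable def alternant {k : ℕ} (μ : Fin k → ℕ) : MvPolynomial (Fin k) ℤ :=
  ∑ σ : Equiv.Perm (Fin k),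
    (Equiv.Perm.sign σ : ℤ) • ∏ i : Fin k, X (σ i) ^ (μ i + (k - 1 - (i : ℕ)))

/-- If two exponents of the alternant coincide, it vanishes. -/
lemma alternant_eq_zero {k : ℕ} (μ : Fin k → ℕ) (a b : Fin k) (hab : a ≠ b)
    (h : μ a + (k - 1 - (a : ℕ)) = μ b + (k - 1 - (b : ℕ))) : alternant μ = 0 := by
  have key : alternant μ = - alternant μ := by
    unfold alternant
    conv_lhs => rw [← Equiv.sum_comp (Equiv.mulRight (Equiv.swap a b))
      (fun σ : Equiv.Perm (Fin k) =>
        (Equiv.Perm.sign σ : ℤ) • ∏ i : Fin k, X (σ i) ^ (μ i + (k - 1 - (i : ℕ))))]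
    rw [← Finset.sum_neg_distrib]
    apply Finset.sum_congr rfl
    intro σ _
    have hsign : (Equiv.Perm.sign (Equiv.mulRight (Equiv.swap a b) σ) : ℤ) =
        - (Equiv.Perm.sign σ : ℤ) := by
      simp [Equiv.Perm.sign_swap hab]
    have hprod : ∏ i : Fin k, (X ((Equiv.mulRight (Equiv.swap a b) σ) i)
            : MvPolynomial (Fin k) ℤ) ^ (μ i + (k - 1 - (i : ℕ)))
        = ∏ i : Fin k, (X (σ i) : MvPolynomial (Fin k) ℤ) ^ (μ i + (k - 1 - (i : ℕ))) := by
      set F : Fin k → MvPolynomial (Fin k) ℤ := fun i =>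
        X (σ i) ^ (μ (Equiv.swap a b i) + (k - 1 - ((Equiv.swap a b i : Fin k) : ℕ))) with hF
      have := Equiv.prod_comp (Equiv.swap a b) F
      simp only [hF] at this
      simp only [Equiv.swap_apply_self] at this
      have hR : ∀ i, ((Equiv.mulRight (Equiv.swap a b)) σ) i = σ ((Equiv.swap a b) i) :=
        fun i => rfl
      simp only [hR]
      rw [this]
      apply Finset.prod_congr rfl
      intro i _
      congr 1
      rcases eq_or_ne i a with rfl | hia
      · rw [Equiv.swap_apply_left]; omega
      rcases eq_or_ne i b with rfl | hib
      · rw [Equiv.swap_apply_right]; omega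
      · rw [Equiv.swap_apply_of_ne_of_ne hia hib]
    rw [hsign, hprod, neg_smul]
  have h2 : (2 : MvPolynomial (Fin k) ℤ) * alternant μ = 0 := by
    rw [two_mul]; nth_rewrite 1 [key]; ring
  rcases mul_eq_zero.mp h2 with h' | h'
  · exact absurd h' two_ne_zero
  · exact h'

/-- `esymm` as a sum over 0/1-exponent vectors. -/
lemma esymm_eq_sum_eps (k m : ℕ) :
    esymm (Fin k) ℤ m =
      ∑ ε ∈ (Fintype.piFinset fun _ : Fin k => Finset.range 2).filter
          (fun ε : Fin k → ℕ => ∑ i : Fin k, ε i = m),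
        ∏ i : Fin k, X i ^ ε i := by
  classical
  rw [esymm]
  refine Finset.sum_nbij' (fun t => fun i => if i ∈ t then 1 else 0)
    (fun ε => Finset.univ.filter fun i => ε i = 1) ?_ ?_ ?_ ?_ ?_
  · intro t ht
    simp only [Finset.mem_powersetCard_univ] at ht
    simp only [Finset.mem_filter, Fintype.mem_piFinset, Finset.mem_range]
    constructor
    · intro i; split <;> omega
    · rw [Finset.sum_ite_mem, Finset.univ_inter, Finset.sum_const, ht]; simp
  · intro ε hε
    simp only [Finset.mem_filter, Fintype.mem_piFinset, Finset.mem_range] at hε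
    simp only [Finset.mem_powersetCard_univ]
    rw [Finset.card_filter]
    rw [← hε.2]
    apply Finset.sum_congr rfl
    intro i _
    have := hε.1 i
    split <;> omega
  · intro t ht
    ext i
    simp
  · intro ε hε
    simp only [Finset.mem_filter, Fintype.mem_piFinset, Finset.mem_range] at hε
    funext i
    have := hε.1 i
    simp only [Finset.mem_filter, Finset.mem_univ, true_and]
    split <;> omega
  · intro t ht
    rw [← Finset.prod_filter_mul_prod_filter_not Finset.univ (· ∈ t)
      (fun i => X i ^ (if i ∈ t then 1 else 0))]
    have h1 : ∀ i ∈ Finset.univ.filter (· ∈ t),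
        X i ^ (if i ∈ t then 1 else 0) = (X i : MvPolynomial (Fin k) ℤ) := by
      intro i hi
      simp only [Finset.mem_filter] at hi
      simp [hi.2]
    have h2 : ∀ i ∈ Finset.univ.filter (¬ · ∈ t),
        X i ^ (if i ∈ t then 1 else 0) = (1 : MvPolynomial (Fin k) ℤ) := by
      intro i hi
      simp only [Finset.mem_filter] at hi
      simp [hi.2]
    rw [Finset.prod_congr rfl h1, Finset.prod_congr rfl h2, Finset.prod_const_one, mul_one]
    congr 1
    ext i
    simp


/-- If `lam + ε` is not antitone (with `ε` a 0/1 vector and `lam` antitone), the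
alternant vanishes. -/
lemma alternant_add_eps_eq_zero {k : ℕ} (lam ε : Fin k → ℕ) (hlam : Antitone lam)
    (hε : ∀ i, ε i ≤ 1) (hA : ¬ Antitone (fun i => lam i + ε i)) :
    alternant (fun i => lam i + ε i) = 0 := by
  rcases k with - | k'
  · exact absurd (fun a _ _ => a.elim0) hA
  rw [Fin.antitone_iff_succ_le] at hA
  push_neg at hA
  obtain ⟨i, hi⟩ := hA
  have h1 : lam i.succ ≤ lam i.castSucc := hlam (Fin.castSucc_lt_succ (i := i)).le
  have h2 := hε i.castSucc
  have h3 := hε i.succ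
  apply alternant_eq_zero _ i.castSucc i.succ (Fin.castSucc_lt_succ (i := i)).ne
  have h4 : (i.castSucc : ℕ) = (i : ℕ) := rfl
  have h5 : (i.succ : ℕ) = (i : ℕ) + 1 := rfl
  have h6 : (i : ℕ) < k' := i.isLt
  simp only [h4, h5]
  omega

open scoped Classical in
/-- Pieri rule for elementary symmetric polynomials: for a partition `λ` with at most
`k` parts and `m ≤ k`, `s_λ · e_m = ∑ s_μ`, the sum over partitions `μ` obtained from
`λ` by adding `m` boxes, no two in the same row (stated multiplied through by the
Vandermonde alternant `a_δ`; partitions with more than `k` rows contribute `0`). -/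
theorem statement15 (k m : ℕ) (hk : 1 ≤ k) (hm : m ≤ k)
    (lam : Fin k → ℕ) (hlam : Antitone lam) :
    alternant lam * esymm (Fin k) ℤ m =
      ∑ μ ∈ (Fintype.piFinset fun _ : Fin k => Finset.range (lam ⟨0, hk⟩ + m + 1)).filter
          (fun μ : Fin k → ℕ => Antitone μ ∧
            (∀ i, lam i ≤ μ i ∧ μ i ≤ lam i + 1) ∧
            (∑ i : Fin k, (μ i - lam i)) = m),
        alternant μ := by
  classical
  set E := (Fintype.piFinset fun _ : Fin k => Finset.range 2).filter
      (fun ε : Fin k → ℕ => ∑ i : Fin k, ε i = m) with hE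
  have hmemE : ∀ ε : Fin k → ℕ, ε ∈ E ↔ (∀ i, ε i ≤ 1) ∧ ∑ i : Fin k, ε i = m := by
    intro ε
    simp only [hE, Finset.mem_filter, Fintype.mem_piFinset, Finset.mem_range]
    constructor
    · rintro ⟨h1, h2⟩; exact ⟨fun i => by have := h1 i; omega, h2⟩
    · rintro ⟨h1, h2⟩; exact ⟨fun i => by have := h1 i; omega, h2⟩
  have step1 : alternant lam * esymm (Fin k) ℤ m =
      ∑ ε ∈ E, alternant (fun i => lam i + ε i) := by
    rw [esymm_eq_sum_eps, alternant, Finset.sum_mul]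
    have hterm : ∀ σ : Equiv.Perm (Fin k),
        ((Equiv.Perm.sign σ : ℤ) • ∏ i : Fin k, X (σ i) ^ (lam i + (k - 1 - (i : ℕ)))) *
          ∑ ε ∈ E, ∏ i : Fin k, (X i : MvPolynomial (Fin k) ℤ) ^ ε i
        = ∑ ε ∈ E, (Equiv.Perm.sign σ : ℤ) •
            ∏ i : Fin k, X (σ i) ^ ((lam i + ε i) + (k - 1 - (i : ℕ))) := by
      intro σ
      rw [Finset.mul_sum]
      refine Finset.sum_nbij' (fun ε => fun i => ε (σ i)) (fun ε => fun i => ε (σ.symm i))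
        ?_ ?_ ?_ ?_ ?_
      · intro ε hε
        beta_reduce
        rw [hmemE] at hε ⊢
        refine ⟨fun i => hε.1 _, ?_⟩
        rw [← hε.2]
        exact Equiv.sum_comp σ ε
      · intro ε hε
        beta_reduce
        rw [hmemE] at hε ⊢
        refine ⟨fun i => hε.1 _, ?_⟩
        rw [← hε.2]
        exact Equiv.sum_comp σ.symm ε
      · intro ε _; funext i; simp
      · intro ε _; funext i; simp
      · intro ε _
        beta_reduce
        have hg : ∏ i : Fin k, (X i : MvPolynomial (Fin k) ℤ) ^ ε i
            = ∏ i : Fin k, (X (σ i) : MvPolynomial (Fin k) ℤ) ^ ε (σ i) :=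
          (Equiv.prod_comp σ (fun i => (X i : MvPolynomial (Fin k) ℤ) ^ ε i)).symm
        rw [hg, smul_mul_assoc, ← Finset.prod_mul_distrib]
        congr 1
        apply Finset.prod_congr rfl
        intro i _
        rw [← pow_add]
        congr 1
        have : (i : ℕ) < k := i.isLt
        omega
    rw [Finset.sum_congr rfl (fun σ _ => hterm σ), Finset.sum_comm]
    apply Finset.sum_congr rfl
    intro ε _
    rfl
  rw [step1]
  rw [← Finset.sum_filter_add_sum_filter_not E
    (fun ε => Antitone (fun i => lam i + ε i))]
  have bad : ∑ ε ∈ E.filter (fun ε => ¬ Antitone (fun i => lam i + ε i)),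
      alternant (fun i => lam i + ε i) = 0 := by
    apply Finset.sum_eq_zero
    intro ε hε
    rw [Finset.mem_filter, hmemE] at hε
    exact alternant_add_eps_eq_zero lam ε hlam hε.1.1 hε.2
  rw [bad, add_zero]
  refine Finset.sum_nbij' (fun ε => fun i => lam i + ε i) (fun μ => fun i => μ i - lam i)
    ?_ ?_ ?_ ?_ ?_
  · intro ε hε
    beta_reduce
    rw [Finset.mem_filter, hmemE] at hε
    obtain ⟨⟨h1, h2⟩, h3⟩ := hε
    rw [Finset.mem_filter, Fintype.mem_piFinset]
    refine ⟨fun i => ?_, h3, fun i => ?_, ?_⟩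
    case refine_2 =>
      beta_reduce
      have := h1 i
      omega
    · rw [Finset.mem_range]
      have hle : lam i ≤ lam ⟨0, hk⟩ := hlam (show (⟨0, hk⟩ : Fin k) ≤ i by
        simp [Fin.le_def])
      have hεm : ε i ≤ m := by
        rw [← h2]
        exact Finset.single_le_sum (fun j _ => Nat.zero_le _) (Finset.mem_univ i)
      omega
    · rw [← h2]
      apply Finset.sum_congr rfl
      intro i _
      beta_reduce
      omega
  · intro μ hμ
    beta_reduce
    rw [Finset.mem_filter] at hμ
    obtain ⟨-, hanti, hb, hs⟩ := hμ
    rw [Finset.mem_filter, hmemE]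
    have heq : (fun i => lam i + (μ i - lam i)) = μ := by
      funext i; have := (hb i).1; omega
    refine ⟨⟨fun i => by have := hb i; omega, hs⟩, ?_⟩
    rw [heq]; exact hanti
  · intro ε hε
    beta_reduce
    funext i; omega
  · intro μ hμ
    beta_reduce
    rw [Finset.mem_filter] at hμ
    funext i
    have := (hμ.2.2.1 i).1
    omega
  · intro ε _
    beta_reduce
    rfl
end

section
/- Pieri rule for complete homogeneous symmetric polynomials: for a partition λ with at most k parts, s_λ · h_m equals the sum of s_μ over partitions μ obtained from λ by adding m boxes with no two added boxes in the same column. -/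
open MvPolynomial

open Finset

noncomputable def alt {k : ℕ} (e : Fin k → ℕ) : MvPolynomial (Fin k) ℤ :=
  ∑ σ : Equiv.Perm (Fin k), (Equiv.Perm.sign σ : ℤ) • ∏ i : Fin k, X (σ i) ^ e i

lemma alt_comp_perm {k : ℕ} (e : Fin k → ℕ) (τ : Equiv.Perm (Fin k)) :
    alt (e ∘ τ) = (Equiv.Perm.sign τ : ℤ) • alt e := by
  unfold alt
  rw [Finset.smul_sum]
  apply Fintype.sum_equiv (Equiv.mulRight τ⁻¹)
  intro σ
  have h1 : ∏ i : Fin k, X (R := ℤ) (σ i) ^ (e ∘ τ) i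
      = ∏ i : Fin k, X (σ (τ⁻¹ i)) ^ e i := by
    rw [← Equiv.prod_comp τ (fun j => X (R := ℤ) (σ (τ⁻¹ j)) ^ e j)]
    simp
  have h4 : Equiv.Perm.sign τ * Equiv.Perm.sign (σ * τ⁻¹) = Equiv.Perm.sign σ := by
    rw [Equiv.Perm.sign_mul, Equiv.Perm.sign_inv, ← mul_assoc,
      mul_comm (Equiv.Perm.sign τ) (Equiv.Perm.sign σ), mul_assoc, Int.units_mul_self, mul_one]
  rw [h1, smul_smul]
  simp only [Equiv.coe_mulRight, Equiv.Perm.coe_mul, Function.comp_apply]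
  rw [← Units.val_mul, h4]

lemma alt_eq_zero {k : ℕ} {e : Fin k → ℕ} {i j : Fin k} (hij : i ≠ j) (h : e i = e j) :
    alt e = 0 := by
  have h1 : e ∘ (Equiv.swap i j) = e := by
    funext x
    rcases eq_or_ne x i with rfl | hxi
    · simp [Equiv.swap_apply_left, h]
    rcases eq_or_ne x j with rfl | hxj
    · simp [Equiv.swap_apply_right, ← h]
    · simp [Equiv.swap_apply_of_ne_of_ne hxi hxj]
  have h2 := alt_comp_perm e (Equiv.swap i j)
  rw [h1, Equiv.Perm.sign_swap hij] at h2
  have h3 : (2 : ℤ) • alt e = 0 := by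
    have h5 : alt e = -(alt e) := by simpa using h2
    rw [two_smul]
    nth_rewrite 1 [h5]
    abel
  have h6 := smul_eq_zero (r := (2:ℤ)) (m := alt e) |>.mp h3
  simpa using h6

lemma fin_gap_mono {k : ℕ} {F : Fin k → ℕ} (h : StrictMono F) :
    ∀ (d : ℕ) (i j : Fin k), (j : ℕ) = (i : ℕ) + d → F i + d ≤ F j := by
  intro d
  induction d with
  | zero => intro i j hij; have : i = j := Fin.ext (by omega); subst this; omega
  | succ d ih =>
    intro i j hij
    have hj' : (i : ℕ) + d < k := by omega
    have h1 := ih i ⟨(i : ℕ) + d, hj'⟩ rfl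
    have h2 : F ⟨(i : ℕ) + d, hj'⟩ < F j := h (by simp [Fin.lt_def]; omega)
    omega

lemma fin_gap_anti {k : ℕ} {F : Fin k → ℕ} (h : StrictAnti F) :
    ∀ (d : ℕ) (i j : Fin k), (j : ℕ) = (i : ℕ) + d → F j + d ≤ F i := by
  intro d
  induction d with
  | zero => intro i j hij; have : i = j := Fin.ext (by omega); subst this; omega
  | succ d ih =>
    intro i j hij
    have hj' : (i : ℕ) + d < k := by omega
    have h1 := ih i ⟨(i : ℕ) + d, hj'⟩ rfl
    have h2 : F j < F ⟨(i : ℕ) + d, hj'⟩ := h (by simp [Fin.lt_def]; omega)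
    omega

lemma perm_strictMono_eq_id {k : ℕ} (π : Equiv.Perm (Fin k)) (h : StrictMono (π : Fin k → Fin k)) :
    ∀ i, π i = i := by
  have hle : ∀ i : Fin k, (i : ℕ) ≤ (π i : ℕ) := by
    intro i
    set F : Fin k → ℕ := fun j => ((π j : ℕ)) with hF
    have h0 : StrictMono F := fun a b hab => h hab
    have h1 := fin_gap_mono h0 (i : ℕ) ⟨0, lt_of_le_of_lt (Nat.zero_le _) i.isLt⟩ i (by simp)
    show (i : ℕ) ≤ F i
    omega
  have hsum : ∑ i : Fin k, ((π i : ℕ)) = ∑ i : Fin k, (i : ℕ) :=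
    Equiv.sum_comp π (fun i => (i : ℕ))
  have := (Finset.sum_eq_sum_iff_of_le (fun i _ => hle i)).mp hsum.symm
  intro i
  exact Fin.ext ((this i (Finset.mem_univ i)).symm)

lemma count_univ_sum (k : ℕ) (s : Multiset (Fin k)) :
    ∑ i : Fin k, s.count i = Multiset.card s := by
  classical
  rw [← Multiset.toFinset_sum_count_eq s]
  symm
  apply Finset.sum_subset (Finset.subset_univ _)
  intro x _ hx
  simpa [Multiset.count_eq_zero] using hx

lemma replicate_count_sum (k : ℕ) (s : Multiset (Fin k)) :
    ∑ i : Fin k, Multiset.replicate (s.count i) i = s := by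
  classical
  conv_rhs => rw [← Multiset.toFinset_sum_count_nsmul_eq s]
  simp only [Multiset.nsmul_singleton]
  symm
  apply Finset.sum_subset (Finset.subset_univ _)
  intro x _ hx
  simp only [Multiset.mem_toFinset] at hx
  rw [Multiset.count_eq_zero_of_notMem hx, Multiset.replicate_zero]

lemma hsymm_expand (k m : ℕ) :
    hsymm (Fin k) ℤ m = ∑ β ∈ (Fintype.piFinset fun _ : Fin k => Finset.range (m+1)).filter
      (fun β : Fin k → ℕ => ∑ i, β i = m), ∏ i, X (R := ℤ) i ^ β i := by
  classical
  unfold hsymm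
  apply Finset.sum_bij (i := fun (s : Sym (Fin k) m) _ => fun i : Fin k => s.1.count i)
  · intro s _
    simp only [Finset.mem_filter, Fintype.mem_piFinset, Finset.mem_range]
    refine ⟨fun i => ?_, ?_⟩
    · have h1 : s.1.count i ≤ Multiset.card s.1 := Multiset.count_le_card _ _
      have h2 : Multiset.card s.1 = m := s.2
      omega
    · rw [count_univ_sum, s.2]
  · intro s _ t _ h
    apply Subtype.ext
    apply Multiset.ext.mpr
    intro a
    exact congrFun h a
  · intro β hβ
    simp only [Finset.mem_filter, Fintype.mem_piFinset, Finset.mem_range] at hβ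
    refine ⟨⟨∑ i : Fin k, Multiset.replicate (β i) i, by
      rw [show Multiset.card (∑ i : Fin k, Multiset.replicate (β i) i)
          = (⟨⟨Multiset.card, Multiset.card_zero⟩, Multiset.card_add⟩ : Multiset (Fin k) →+ ℕ)
            (∑ i : Fin k, Multiset.replicate (β i) i) from rfl, map_sum]
      simpa using hβ.2⟩, Finset.mem_univ _, ?_⟩
    funext j
    simp [Multiset.count_sum', Multiset.count_replicate]
  · intro s _
    rw [Finset.prod_multiset_map_count]
    apply Finset.prod_subset (Finset.subset_univ _)
    intro x _ hx
    simp only [Multiset.mem_toFinset] at hx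
    rw [Multiset.count_eq_zero_of_notMem hx, pow_zero]
lemma sum_B_comp {k m : ℕ} {M : Type*} [AddCommMonoid M] (σ : Equiv.Perm (Fin k))
    (F : (Fin k → ℕ) → M) :
    ∑ β ∈ (Fintype.piFinset fun _ : Fin k => Finset.range (m+1)).filter
        (fun β : Fin k → ℕ => ∑ i, β i = m), F (β ∘ σ)
    = ∑ β ∈ (Fintype.piFinset fun _ : Fin k => Finset.range (m+1)).filter
        (fun β : Fin k → ℕ => ∑ i, β i = m), F β := by
  classical
  apply Finset.sum_nbij' (i := fun β => β ∘ σ) (j := fun β => β ∘ σ.symm)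
  · intro β hβ
    simp only [Finset.mem_filter, Fintype.mem_piFinset, Finset.mem_range] at hβ ⊢
    exact ⟨fun i => hβ.1 _, by rw [← hβ.2]; exact Equiv.sum_comp σ β⟩
  · intro β hβ
    simp only [Finset.mem_filter, Fintype.mem_piFinset, Finset.mem_range] at hβ ⊢
    exact ⟨fun i => hβ.1 _, by rw [← hβ.2]; exact Equiv.sum_comp σ.symm β⟩
  · intro β _; funext i; simp
  · intro β _; funext i; simp
  · intro β _; rfl


lemma step1 (k m : ℕ) (lam : Fin k → ℕ)
    (hsymm_expand : hsymm (Fin k) ℤ m = ∑ β ∈ (Fintype.piFinset fun _ : Fin k => Finset.range (m+1)).filter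
      (fun β : Fin k → ℕ => ∑ i, β i = m), ∏ i, X (R := ℤ) i ^ β i) :
    alt (fun i => lam i + (k - 1 - (i : ℕ))) * hsymm (Fin k) ℤ m =
      ∑ β ∈ (Fintype.piFinset fun _ : Fin k => Finset.range (m+1)).filter
        (fun β : Fin k → ℕ => ∑ i, β i = m),
        alt (fun i => (lam i + (k - 1 - (i : ℕ))) + β i) := by
  classical
  set g : Fin k → ℕ := fun i => lam i + (k - 1 - (i : ℕ)) with hg
  set B := (Fintype.piFinset fun _ : Fin k => Finset.range (m+1)).filter
      (fun β : Fin k → ℕ => ∑ i, β i = m) with hB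
  rw [hsymm_expand]
  unfold alt
  rw [Finset.sum_mul_sum]
  have key : ∀ σ : Equiv.Perm (Fin k),
      ∑ β ∈ B, ((Equiv.Perm.sign σ : ℤ) • ∏ i : Fin k, X (σ i) ^ g i) * ∏ i, X (R := ℤ) i ^ β i
      = ∑ β ∈ B, (Equiv.Perm.sign σ : ℤ) • ∏ i : Fin k, X (σ i) ^ (g i + β i) := by
    intro σ
    have e1 : ∀ β : Fin k → ℕ,
        ((Equiv.Perm.sign σ : ℤ) • ∏ i : Fin k, X (σ i) ^ g i) * ∏ i, X (R := ℤ) i ^ β i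
        = (Equiv.Perm.sign σ : ℤ) • ∏ i : Fin k, X (σ i) ^ (g i + β (σ i)) := by
      intro β
      rw [smul_mul_assoc]
      congr 1
      rw [show (∏ i, X (R := ℤ) i ^ β i) = ∏ i, X (R := ℤ) (σ i) ^ β (σ i) from
        (Equiv.prod_comp σ (fun i => X (R := ℤ) i ^ β i)).symm, ← Finset.prod_mul_distrib]
      exact Finset.prod_congr rfl fun i _ => (pow_add _ _ _).symm
    calc ∑ β ∈ B, ((Equiv.Perm.sign σ : ℤ) • ∏ i : Fin k, X (σ i) ^ g i) * ∏ i, X (R := ℤ) i ^ β i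
        = ∑ β ∈ B, (Equiv.Perm.sign σ : ℤ) • ∏ i : Fin k, X (σ i) ^ (g i + β (σ i)) :=
          Finset.sum_congr rfl fun β _ => e1 β
      _ = ∑ β ∈ B, (Equiv.Perm.sign σ : ℤ) • ∏ i : Fin k, X (σ i) ^ (g i + β i) :=
          sum_B_comp σ (fun β => (Equiv.Perm.sign σ : ℤ) • ∏ i : Fin k, X (σ i) ^ (g i + β i))
  calc ∑ σ : Equiv.Perm (Fin k), ∑ β ∈ B,
        ((Equiv.Perm.sign σ : ℤ) • ∏ i : Fin k, X (σ i) ^ g i) * ∏ i, X (R := ℤ) i ^ β i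
      = ∑ σ : Equiv.Perm (Fin k), ∑ β ∈ B,
        (Equiv.Perm.sign σ : ℤ) • ∏ i : Fin k, X (σ i) ^ (g i + β i) :=
        Finset.sum_congr rfl fun σ _ => key σ
    _ = ∑ β ∈ B, ∑ σ : Equiv.Perm (Fin k),
        (Equiv.Perm.sign σ : ℤ) • ∏ i : Fin k, X (σ i) ^ (g i + β i) := Finset.sum_comm

lemma fin_mem_iff_lt_card {k : ℕ} (S : Finset (Fin k))
    (hdown : ∀ j j' : Fin k, j' ≤ j → j ∈ S → j' ∈ S) (j : Fin k) :
    j ∈ S ↔ (j : ℕ) < S.card := by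
  constructor
  · intro hj
    have hsub : Finset.Iic j ⊆ S := fun j' hj' => hdown j j' (Finset.mem_Iic.mp hj') hj
    have := Finset.card_le_card hsub
    rw [Fin.card_Iic] at this
    omega
  · intro hj
    by_contra hnot
    have hsub : S ⊆ Finset.Iio j := by
      intro j' hj'
      rw [Finset.mem_Iio]
      by_contra hge
      exact hnot (hdown j' j (le_of_not_gt hge) hj')
    have := Finset.card_le_card hsub
    rw [Fin.card_Iio] at this
    omega

lemma det_indicator (k : ℕ) (f g : Fin k → ℕ) (hf : StrictAnti f) (hg : StrictAnti g) :
    (∑ ρ : Equiv.Perm (Fin k), if ∀ i, g i ≤ f (ρ i) then (Equiv.Perm.sign ρ : ℤ) else 0)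
    = if (∀ i, g i ≤ f i) ∧ (∀ i j : Fin k, (j : ℕ) = (i : ℕ) + 1 → f j < g i) then 1 else 0 := by
  classical
  set M : Matrix (Fin k) (Fin k) ℤ := Matrix.of (fun i j => if g j ≤ f i then 1 else 0) with hM
  set s : Fin k → ℕ := fun i => (Finset.univ.filter (fun j => f i < g j)).card with hs
  have hmem : ∀ i j : Fin k, f i < g j ↔ (j : ℕ) < s i := by
    intro i j
    have hd : ∀ a b : Fin k, b ≤ a → a ∈ Finset.univ.filter (fun j => f i < g j)
        → b ∈ Finset.univ.filter (fun j => f i < g j) := by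
      intro a b hba ha
      simp only [Finset.mem_filter, Finset.mem_univ, true_and] at ha ⊢
      exact lt_of_lt_of_le ha (hg.antitone hba)
    have := fin_mem_iff_lt_card _ hd j
    simpa using this
  have hMent : ∀ i j : Fin k, M i j = if s i ≤ (j : ℕ) then 1 else 0 := by
    intro i j
    simp only [hM, Matrix.of_apply]
    by_cases hc : g j ≤ f i
    · have h2 : ¬ f i < g j := not_lt.mpr hc
      have h4 : ¬ (j : ℕ) < s i := fun hh => h2 ((hmem i j).mpr hh)
      rw [if_pos hc, if_pos (le_of_not_gt h4)]
    · have h2 : f i < g j := not_le.mp hc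
      have h4 : (j : ℕ) < s i := (hmem i j).mp h2
      rw [if_neg hc, if_neg (by omega)]
  have hsmono : Monotone s := by
    intro a b hab
    apply Finset.card_le_card
    intro j hj
    simp only [Finset.mem_filter, Finset.mem_univ, true_and] at hj ⊢
    exact lt_of_le_of_lt (hf.antitone hab) hj
  have hdet : (∑ ρ : Equiv.Perm (Fin k), if ∀ i, g i ≤ f (ρ i) then (Equiv.Perm.sign ρ : ℤ) else 0)
      = M.det := by
    rw [Matrix.det_apply]
    apply Finset.sum_congr rfl
    intro ρ _
    have hprod : (∏ i, M (ρ i) i) = if ∀ i, g i ≤ f (ρ i) then (1:ℤ) else 0 := by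
      rw [show (∏ i, M (ρ i) i) = ∏ i, (if g i ≤ f (ρ i) then (1:ℤ) else 0) from rfl,
        Finset.prod_boole]
      congr 1
      simp
    rw [hprod]
    by_cases hcond : ∀ i, g i ≤ f (ρ i) <;> simp [hcond, Units.smul_def]
  rw [hdet]
  by_cases hcase : ∀ i : Fin k, s i = (i : ℕ)
  · have hcond : (∀ i, g i ≤ f i) ∧ (∀ i j : Fin k, (j:ℕ) = (i:ℕ)+1 → f j < g i) := by
      constructor
      · intro i
        by_contra hc
        have h5 := (hmem i i).mp (not_le.mp hc)
        rw [hcase i] at h5; omega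
      · intro i j hij
        apply (hmem j i).mpr
        rw [hcase j]; omega
    rw [if_pos hcond]
    have htri : M.det = ∏ i, M i i := Matrix.det_of_upperTriangular (by
      intro i j hij
      rw [hMent]
      exact if_neg (by have h10 := Fin.lt_def.mp hij; simp at h10; rw [hcase i]; omega))
    rw [htri]
    apply Finset.prod_eq_one
    intro i _
    rw [hMent, if_pos (by rw [hcase i])]
  · have hcond : ¬ ((∀ i, g i ≤ f i) ∧ (∀ i j : Fin k, (j:ℕ)=(i:ℕ)+1 → f j < g i)) := by
      rintro ⟨h1, h2⟩
      apply hcase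
      intro i
      have hub : ¬ ((i:ℕ) < s i) := fun hh => absurd (h1 i) (not_le.mpr ((hmem i i).mpr hh))
      rcases Nat.eq_zero_or_pos (i:ℕ) with h0 | h0
      · omega
      · have hi' : (i:ℕ) - 1 < k := by have := i.isLt; omega
        have h6 := h2 ⟨(i:ℕ)-1, hi'⟩ i (by simp; omega)
        have h7 := (hmem i ⟨(i:ℕ)-1, hi'⟩).mp h6
        simp at h7
        omega
    rw [if_neg hcond]
    by_cases hadj : ∃ i : Fin k, ∃ h' : (i:ℕ)+1 < k, s i = s ⟨(i:ℕ)+1, h'⟩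
    · obtain ⟨i, h', heq⟩ := hadj
      apply Matrix.det_zero_of_row_eq (i := i) (j := ⟨(i:ℕ)+1, h'⟩)
      · intro hc; have := congrArg Fin.val hc; simp at this
      · funext j
        rw [show M i = fun j => M i j from rfl, show M ⟨(i:ℕ)+1, h'⟩ = fun j => M ⟨(i:ℕ)+1, h'⟩ j from rfl]
        simp only
        rw [hMent, hMent, heq]
    · have hsm : StrictMono s := by
        intro a b hab
        have hs1 : (a:ℕ)+1 < k := by have := b.isLt; have := Fin.lt_def.mp hab; omega
        have hlt : s a < s ⟨(a:ℕ)+1, hs1⟩ := by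
          rcases lt_or_eq_of_le (hsmono (show a ≤ ⟨(a:ℕ)+1, hs1⟩ from by
            rw [Fin.le_def]; simp)) with h | h
          · exact h
          · exact absurd ⟨a, hs1, h⟩ hadj
        exact lt_of_lt_of_le hlt (hsmono (show (⟨(a:ℕ)+1,hs1⟩ : Fin k) ≤ b from by
          rw [Fin.le_def]; have := Fin.lt_def.mp hab; simp; omega))
      have hge : ∀ i : Fin k, (i:ℕ) ≤ s i := by
        intro i
        have h8 := fin_gap_mono hsm (i:ℕ) ⟨0, lt_of_le_of_lt (Nat.zero_le _) i.isLt⟩ i (by simp)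
        omega
      obtain ⟨i0, hi0⟩ := not_forall.mp hcase
      have hi0' : (i0:ℕ) + 1 ≤ s i0 := by have := hge i0; omega
      have hklt : k - 1 < k := by have := i0.isLt; omega
      have hlast : k ≤ s ⟨k-1, hklt⟩ := by
        have h9 := fin_gap_mono hsm ((k-1) - (i0:ℕ)) i0 ⟨k-1, hklt⟩ (by simp; have := i0.isLt; omega)
        omega
      apply Matrix.det_eq_zero_of_row_eq_zero ⟨k-1, hklt⟩
      intro j
      rw [hMent]
      exact if_neg (by have := j.isLt; omega)
noncomputable def sortPerm {k : ℕ} (F : Fin k → ℕ) : Equiv.Perm (Fin k) :=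
  Tuple.sort F * Fin.revPerm

lemma sortPerm_anti {k : ℕ} (F : Fin k → ℕ) (hinj : Function.Injective F) :
    StrictAnti (fun i => F (sortPerm F i)) := by
  have hmono : Monotone (F ∘ Tuple.sort F) := Tuple.monotone_sort F
  have hinj2 : Function.Injective (F ∘ Tuple.sort F) :=
    hinj.comp (Tuple.sort F).injective
  have hsm : StrictMono (F ∘ Tuple.sort F) := hmono.strictMono_of_injective hinj2
  intro a b hab
  exact hsm (by simpa [Fin.rev_lt_rev] using hab)

lemma sortPerm_delta_le {k : ℕ} (F : Fin k → ℕ) (hinj : Function.Injective F) (i : Fin k) :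
    k - 1 - (i : ℕ) ≤ F (sortPerm F i) := by
  have h := fin_gap_anti (sortPerm_anti F hinj) ((k - 1) - (i : ℕ)) i
    ⟨k - 1, by have := i.isLt; omega⟩ (by simp; have := i.isLt; omega)
  omega

noncomputable def muOf {k : ℕ} (F : Fin k → ℕ) : Fin k → ℕ :=
  fun i => F (sortPerm F i) - (k - 1 - (i : ℕ))

lemma muOf_add {k : ℕ} (F : Fin k → ℕ) (hinj : Function.Injective F) (i : Fin k) :
    muOf F i + (k - 1 - (i : ℕ)) = F (sortPerm F i) := by
  have := sortPerm_delta_le F hinj i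
  simp only [muOf]
  omega

lemma muOf_antitone {k : ℕ} (F : Fin k → ℕ) (hinj : Function.Injective F) :
    Antitone (muOf F) := by
  intro a b hab
  have h := fin_gap_anti (sortPerm_anti F hinj) ((b : ℕ) - (a : ℕ)) a b
    (by have := Fin.le_def.mp hab; omega)
  have hb := b.isLt
  have hab' := Fin.le_def.mp hab
  simp only [muOf]
  omega

lemma decomp_unique {k : ℕ} (F : Fin k → ℕ) (μ : Fin k → ℕ) (hμ : Antitone μ)
    (ρ : Equiv.Perm (Fin k))
    (h : ∀ j, F j = μ (ρ j) + (k - 1 - ((ρ j : Fin k) : ℕ))) :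
    μ = muOf F ∧ ρ = (sortPerm F)⁻¹ := by
  have hμδ : StrictAnti (fun i : Fin k => μ i + (k - 1 - (i : ℕ))) := by
    intro a b hab
    have h1 := hμ hab.le
    have h2 := b.isLt
    have h3 := Fin.lt_def.mp hab
    simp only
    omega
  have hinj : Function.Injective F := by
    intro a b hab'
    apply ρ.injective
    apply hμδ.injective
    have ha := h a
    have hb := h b
    show μ (ρ a) + (k - 1 - ((ρ a : Fin k) : ℕ)) = μ (ρ b) + (k - 1 - ((ρ b : Fin k) : ℕ))
    omega
  have hπ : StrictMono ((ρ * sortPerm F : Equiv.Perm (Fin k)) : Fin k → Fin k) := by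
    intro a b hab
    have h1 : F (sortPerm F b) < F (sortPerm F a) := sortPerm_anti F hinj hab
    rw [h (sortPerm F a), h (sortPerm F b)] at h1
    by_contra hge
    have h2 : ρ (sortPerm F b) ≤ ρ (sortPerm F a) := le_of_not_gt hge
    have h3 : μ (ρ (sortPerm F a)) + (k - 1 - ((ρ (sortPerm F a) : Fin k) : ℕ))
        ≤ μ (ρ (sortPerm F b)) + (k - 1 - ((ρ (sortPerm F b) : Fin k) : ℕ)) := hμδ.antitone h2
    omega
  have hid := perm_strictMono_eq_id _ hπ
  simp only [Equiv.Perm.coe_mul, Function.comp_apply] at hid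
  have hρ : ρ = (sortPerm F)⁻¹ := by
    ext j
    have h4 := hid ((sortPerm F)⁻¹ j)
    rw [show ∀ (σ : Equiv.Perm (Fin k)) (x : Fin k), σ (σ⁻¹ x) = x from fun σ x => σ.apply_symm_apply x] at h4
    exact congrArg Fin.val h4
  refine ⟨?_, hρ⟩
  funext i
  have h5 := h (sortPerm F i)
  rw [hid i] at h5
  have h6 := muOf_add F hinj i
  omega

lemma pieri_bij (k m : ℕ) (hk : 1 ≤ k) (lam : Fin k → ℕ) (hlam : Antitone lam) :
    ∑ β ∈ (((Fintype.piFinset fun _ : Fin k => Finset.range (m+1)).filter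
        (fun β : Fin k → ℕ => ∑ i, β i = m)).filter
        (fun β => Function.Injective (fun i : Fin k => (lam i + (k-1-(i:ℕ))) + β i))),
      alt (fun i => (lam i + (k-1-(i:ℕ))) + β i)
    = ∑ p ∈ ((((Fintype.piFinset fun _ : Fin k => Finset.range (lam ⟨0,hk⟩ + m + 1)).filter
        (fun μ : Fin k → ℕ => Antitone μ ∧ ∑ i, μ i = (∑ i, lam i) + m)) ×ˢ
        (Finset.univ : Finset (Equiv.Perm (Fin k)))).filter
        (fun p => ∀ j : Fin k, lam j + (k-1-(j:ℕ)) ≤ p.1 (p.2 j) + (k-1-((p.2 j : Fin k):ℕ)))),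
      (Equiv.Perm.sign p.2 : ℤ) • alt (fun i => p.1 i + (k-1-(i:ℕ))) := by
  classical
  apply Finset.sum_bij (i := fun β _ =>
    (muOf (fun i : Fin k => (lam i + (k-1-(i:ℕ))) + β i),
     (sortPerm (fun i : Fin k => (lam i + (k-1-(i:ℕ))) + β i))⁻¹))
  · -- membership
    intro β hβ
    simp only [Finset.mem_filter, Fintype.mem_piFinset, Finset.mem_range] at hβ
    obtain ⟨⟨hrange, hsum⟩, hinjF⟩ := hβ
    set F : Fin k → ℕ := fun i : Fin k => (lam i + (k-1-(i:ℕ))) + β i with hF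
    have hμanti := muOf_antitone F hinjF
    have hadd := muOf_add F hinjF
    simp only [Finset.mem_filter, Finset.mem_product, Fintype.mem_piFinset, Finset.mem_range,
      Finset.mem_univ, and_true]
    refine ⟨⟨?_, hμanti, ?_⟩, ?_⟩
    · -- box
      intro i
      have h1 : muOf F i ≤ muOf F ⟨0, hk⟩ := hμanti (by rw [Fin.le_def]; exact Nat.zero_le _)
      have h2 := hadd ⟨0, hk⟩
      have h3 : F (sortPerm F ⟨0, hk⟩) ≤ (lam ⟨0, hk⟩ + (k-1)) + m := by
        have h4 : lam (sortPerm F ⟨0, hk⟩) ≤ lam ⟨0, hk⟩ :=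
          hlam (by rw [Fin.le_def]; exact Nat.zero_le _)
        have h5 : β (sortPerm F ⟨0, hk⟩) < m + 1 := hrange _
        have h6 : (k - 1 - ((sortPerm F ⟨0, hk⟩ : Fin k):ℕ)) ≤ k - 1 := by omega
        show (lam (sortPerm F ⟨0, hk⟩) + _) + β (sortPerm F ⟨0, hk⟩) ≤ _
        omega
      simp only [Fin.val_zero] at h2 ⊢
      omega
    · -- sum
      have h1 : ∑ i : Fin k, (muOf F i + (k-1-(i:ℕ))) = ∑ i : Fin k, F (sortPerm F i) :=
        Finset.sum_congr rfl fun i _ => hadd i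
      have h2 : ∑ i : Fin k, F (sortPerm F i) = ∑ i : Fin k, F i :=
        Equiv.sum_comp (sortPerm F) F
      have h3 : ∑ i : Fin k, F i = (∑ i : Fin k, (lam i + (k-1-(i:ℕ)))) + ∑ i : Fin k, β i := by
        rw [← Finset.sum_add_distrib]
      have h4 : ∑ i : Fin k, (muOf F i + (k-1-(i:ℕ)))
          = (∑ i : Fin k, muOf F i) + ∑ i : Fin k, (k-1-(i:ℕ)) := Finset.sum_add_distrib
      have h5 : ∑ i : Fin k, (lam i + (k-1-(i:ℕ)))
          = (∑ i : Fin k, lam i) + ∑ i : Fin k, (k-1-(i:ℕ)) := Finset.sum_add_distrib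
      omega
    · -- compat condition
      intro j
      have h1 := hadd ((sortPerm F)⁻¹ j)
      rw [show ∀ (σ : Equiv.Perm (Fin k)) (x : Fin k), σ (σ⁻¹ x) = x from fun σ x => σ.apply_symm_apply x] at h1
      rw [h1]
      show lam j + (k-1-(j:ℕ)) ≤ (lam j + (k-1-(j:ℕ))) + β j
      omega
  · -- injectivity
    intro β₁ hβ₁ β₂ hβ₂ heq
    simp only [Finset.mem_filter, Fintype.mem_piFinset, Finset.mem_range] at hβ₁ hβ₂
    obtain ⟨⟨_, _⟩, hinj₁⟩ := hβ₁
    obtain ⟨⟨_, _⟩, hinj₂⟩ := hβ₂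
    set F₁ : Fin k → ℕ := fun i : Fin k => (lam i + (k-1-(i:ℕ))) + β₁ i with hF₁
    set F₂ : Fin k → ℕ := fun i : Fin k => (lam i + (k-1-(i:ℕ))) + β₂ i with hF₂
    have hμ : muOf F₁ = muOf F₂ := congrArg Prod.fst heq
    have hρ : (sortPerm F₁)⁻¹ = (sortPerm F₂)⁻¹ := congrArg Prod.snd heq
    have hsp : sortPerm F₁ = sortPerm F₂ := by
      have := congrArg (·⁻¹) hρ; simpa using this
    have hFF : F₁ = F₂ := by
      funext j
      have h1 := muOf_add F₁ hinj₁ ((sortPerm F₁)⁻¹ j)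
      have h2 := muOf_add F₂ hinj₂ ((sortPerm F₂)⁻¹ j)
      rw [show ∀ (σ : Equiv.Perm (Fin k)) (x : Fin k), σ (σ⁻¹ x) = x from fun σ x => σ.apply_symm_apply x] at h1 h2
      rw [← h1, ← h2, hμ, hρ]
    funext j
    have := congrFun hFF j
    simp only [hF₁, hF₂] at this
    omega
  · -- surjectivity
    intro p hp
    obtain ⟨μ, ρ⟩ := p
    simp only [Finset.mem_filter, Finset.mem_product, Fintype.mem_piFinset, Finset.mem_range,
      Finset.mem_univ, and_true] at hp
    obtain ⟨⟨hbox, hμanti, hμsum⟩, hcompat⟩ := hp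
    refine ⟨fun j => (μ (ρ j) + (k-1-((ρ j : Fin k):ℕ))) - (lam j + (k-1-(j:ℕ))), ?_, ?_⟩
    · -- membership in B_inj
      have hFval : ∀ j : Fin k, (lam j + (k-1-(j:ℕ)))
          + ((μ (ρ j) + (k-1-((ρ j : Fin k):ℕ))) - (lam j + (k-1-(j:ℕ))))
          = μ (ρ j) + (k-1-((ρ j : Fin k):ℕ)) := by
        intro j
        have := hcompat j
        omega
      have hsumβ : ∑ j : Fin k, ((μ (ρ j) + (k-1-((ρ j : Fin k):ℕ))) - (lam j + (k-1-(j:ℕ)))) = m := by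
        have h1 : ∑ j : Fin k, ((lam j + (k-1-(j:ℕ)))
            + ((μ (ρ j) + (k-1-((ρ j : Fin k):ℕ))) - (lam j + (k-1-(j:ℕ)))))
            = ∑ j : Fin k, (μ (ρ j) + (k-1-((ρ j : Fin k):ℕ))) :=
          Finset.sum_congr rfl fun j _ => hFval j
        have h2 : ∑ j : Fin k, (μ (ρ j) + (k-1-((ρ j : Fin k):ℕ)))
            = ∑ j : Fin k, (μ j + (k-1-(j:ℕ))) :=
          Equiv.sum_comp ρ (fun j => μ j + (k-1-(j:ℕ)))
        have h3 : ∑ j : Fin k, (μ j + (k-1-(j:ℕ)))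
            = (∑ j : Fin k, μ j) + ∑ j : Fin k, (k-1-(j:ℕ)) := Finset.sum_add_distrib
        have h4 : ∑ j : Fin k, (lam j + (k-1-(j:ℕ)))
            = (∑ j : Fin k, lam j) + ∑ j : Fin k, (k-1-(j:ℕ)) := Finset.sum_add_distrib
        have h5 := Finset.sum_add_distrib (s := (Finset.univ : Finset (Fin k)))
          (f := fun j => lam j + (k-1-(j:ℕ)))
          (g := fun j => (μ (ρ j) + (k-1-((ρ j : Fin k):ℕ))) - (lam j + (k-1-(j:ℕ))))
        rw [h5] at h1
        omega
      simp only [Finset.mem_filter, Fintype.mem_piFinset, Finset.mem_range]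
      refine ⟨⟨fun j => ?_, hsumβ⟩, ?_⟩
      · have h6 : ((μ (ρ j) + (k-1-((ρ j : Fin k):ℕ))) - (lam j + (k-1-(j:ℕ))))
            ≤ ∑ x : Fin k, ((μ (ρ x) + (k-1-((ρ x : Fin k):ℕ))) - (lam x + (k-1-(x:ℕ)))) :=
          Finset.single_le_sum
            (f := fun j : Fin k => (μ (ρ j) + (k-1-((ρ j : Fin k):ℕ))) - (lam j + (k-1-(j:ℕ))))
            (fun i _ => Nat.zero_le _) (Finset.mem_univ j)
        omega
      · -- injectivity of F
        have hμδ : StrictAnti (fun i : Fin k => μ i + (k - 1 - (i : ℕ))) := by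
          intro a b hab
          have h1 := hμanti hab.le
          have h2 := b.isLt
          have h3 := Fin.lt_def.mp hab
          simp only
          omega
        intro a b hab
        have h7 := hFval a
        have h8 := hFval b
        have h9 : (lam a + (k-1-(a:ℕ))) + ((μ (ρ a) + (k-1-((ρ a : Fin k):ℕ))) - (lam a + (k-1-(a:ℕ))))
            = (lam b + (k-1-(b:ℕ))) + ((μ (ρ b) + (k-1-((ρ b : Fin k):ℕ))) - (lam b + (k-1-(b:ℕ)))) := hab
        have hab' : μ (ρ a) + (k - 1 - ((ρ a : Fin k):ℕ)) = μ (ρ b) + (k - 1 - ((ρ b : Fin k):ℕ)) := by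
          omega
        exact ρ.injective (hμδ.injective hab')
    · -- forward of this β is p
      have hFval : (fun i : Fin k => (lam i + (k-1-(i:ℕ)))
          + ((μ (ρ i) + (k-1-((ρ i : Fin k):ℕ))) - (lam i + (k-1-(i:ℕ)))))
          = fun j => μ (ρ j) + (k-1-((ρ j : Fin k):ℕ)) := by
        funext j
        have := hcompat j
        show (lam j + (k-1-(j:ℕ))) + ((μ (ρ j) + (k-1-((ρ j : Fin k):ℕ))) - (lam j + (k-1-(j:ℕ))))
          = μ (ρ j) + (k-1-((ρ j : Fin k):ℕ))
        omega
      have := decomp_unique (fun i : Fin k => (lam i + (k-1-(i:ℕ)))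
          + ((μ (ρ i) + (k-1-((ρ i : Fin k):ℕ))) - (lam i + (k-1-(i:ℕ))))) μ hμanti ρ
          (fun j => congrFun hFval j)
      exact Prod.ext this.1.symm this.2.symm
  · -- value
    intro β hβ
    simp only [Finset.mem_filter, Fintype.mem_piFinset, Finset.mem_range] at hβ
    obtain ⟨⟨_, _⟩, hinjF⟩ := hβ
    set F : Fin k → ℕ := fun i : Fin k => (lam i + (k-1-(i:ℕ))) + β i with hF
    have hcomp : (fun i : Fin k => muOf F i + (k-1-(i:ℕ))) = F ∘ (sortPerm F) :=
      funext fun i => muOf_add F hinjF i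
    show alt F = _
    simp only
    rw [hcomp, alt_comp_perm F (sortPerm F), smul_smul, ← Units.val_mul,
      Equiv.Perm.sign_inv, Int.units_mul_self]
    simp

open scoped Classical in
/-- Pieri rule for complete homogeneous symmetric polynomials: for a partition `λ`
with at most `k` parts, `s_λ · h_m = ∑ s_μ`, the sum over partitions `μ` obtained from
`λ` by adding `m` boxes, no two in the same column, i.e. `μ_{i+1} ≤ λ_i` (stated
multiplied through by the Vandermonde alternant `a_δ`; partitions with more than
`k` rows contribute `0`). -/
theorem statement16 (k m : ℕ) (hk : 1 ≤ k)
    (lam : Fin k → ℕ) (hlam : Antitone lam) :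
    alternant lam * hsymm (Fin k) ℤ m =
      ∑ μ ∈ (Fintype.piFinset fun _ : Fin k => Finset.range (lam ⟨0, hk⟩ + m + 1)).filter
          (fun μ : Fin k → ℕ => Antitone μ ∧
            (∀ i, lam i ≤ μ i) ∧
            (∀ i j : Fin k, (j : ℕ) = (i : ℕ) + 1 → μ j ≤ lam i) ∧
            (∑ i : Fin k, (μ i - lam i)) = m),
        alternant μ := by
  classical
  have e0 : alternant lam = alt (fun i => lam i + (k - 1 - (i:ℕ))) := rfl
  rw [e0, step1 k m lam (hsymm_expand k m)]
  have h1 : ∑ β ∈ (Fintype.piFinset fun _ : Fin k => Finset.range (m+1)).filter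
        (fun β : Fin k → ℕ => ∑ i, β i = m), alt (fun i => (lam i + (k-1-(i:ℕ))) + β i)
      = ∑ β ∈ ((Fintype.piFinset fun _ : Fin k => Finset.range (m+1)).filter
        (fun β : Fin k → ℕ => ∑ i, β i = m)).filter
        (fun β => Function.Injective (fun i : Fin k => (lam i + (k-1-(i:ℕ))) + β i)),
        alt (fun i => (lam i + (k-1-(i:ℕ))) + β i) := by
    symm
    apply Finset.sum_filter_of_ne
    intro β _ hne
    by_contra hni
    rw [Function.not_injective_iff] at hni
    obtain ⟨a, b, hab, hne'⟩ := hni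
    exact hne (alt_eq_zero hne' hab)
  rw [h1, pieri_bij k m hk lam hlam, Finset.sum_filter, Finset.sum_product]
  have h2 : ∀ μ ∈ (Fintype.piFinset fun _ : Fin k => Finset.range (lam ⟨0,hk⟩ + m + 1)).filter
      (fun μ : Fin k → ℕ => Antitone μ ∧ ∑ i, μ i = (∑ i, lam i) + m),
      (∑ ρ : Equiv.Perm (Fin k),
        if ∀ j : Fin k, lam j + (k-1-(j:ℕ)) ≤ μ (ρ j) + (k-1-((ρ j : Fin k):ℕ))
        then (Equiv.Perm.sign ρ : ℤ) • alt (fun i => μ i + (k-1-(i:ℕ))) else 0)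
      = (if (∀ i, (lam i + (k-1-(i:ℕ))) ≤ μ i + (k-1-(i:ℕ))) ∧
            (∀ i j : Fin k, (j:ℕ) = (i:ℕ)+1 → μ j + (k-1-(j:ℕ)) < lam i + (k-1-(i:ℕ)))
         then (1:ℤ) else 0) • alt (fun i => μ i + (k-1-(i:ℕ))) := by
    intro μ hμP
    simp only [Finset.mem_filter, Fintype.mem_piFinset, Finset.mem_range] at hμP
    obtain ⟨hbox, hμanti, hμsum⟩ := hμP
    have hstep : (∑ ρ : Equiv.Perm (Fin k),
        if ∀ j : Fin k, lam j + (k-1-(j:ℕ)) ≤ μ (ρ j) + (k-1-((ρ j : Fin k):ℕ))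
        then (Equiv.Perm.sign ρ : ℤ) • alt (fun i => μ i + (k-1-(i:ℕ))) else 0)
        = (∑ ρ : Equiv.Perm (Fin k),
          if ∀ j : Fin k, lam j + (k-1-(j:ℕ)) ≤ μ (ρ j) + (k-1-((ρ j : Fin k):ℕ))
          then (Equiv.Perm.sign ρ : ℤ) else 0) • alt (fun i => μ i + (k-1-(i:ℕ))) := by
      rw [Finset.sum_smul]
      apply Finset.sum_congr rfl
      intro ρ _
      rw [ite_smul, zero_smul]
    rw [hstep]
    congr 1
    have hfanti : StrictAnti (fun i : Fin k => μ i + (k - 1 - (i:ℕ))) := by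
      intro a b hab
      have := hμanti hab.le
      have := b.isLt
      have := Fin.lt_def.mp hab
      simp only
      omega
    have hganti : StrictAnti (fun i : Fin k => lam i + (k - 1 - (i:ℕ))) := by
      intro a b hab
      have := hlam hab.le
      have := b.isLt
      have := Fin.lt_def.mp hab
      simp only
      omega
    exact det_indicator k (fun i => μ i + (k-1-(i:ℕ))) (fun i => lam i + (k-1-(i:ℕ)))
      hfanti hganti
  rw [Finset.sum_congr rfl h2]
  have h3 : ∑ μ ∈ (Fintype.piFinset fun _ : Fin k => Finset.range (lam ⟨0,hk⟩ + m + 1)).filter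
      (fun μ : Fin k → ℕ => Antitone μ ∧ ∑ i, μ i = (∑ i, lam i) + m),
      ((if (∀ i, (lam i + (k-1-(i:ℕ))) ≤ μ i + (k-1-(i:ℕ))) ∧
            (∀ i j : Fin k, (j:ℕ) = (i:ℕ)+1 → μ j + (k-1-(j:ℕ)) < lam i + (k-1-(i:ℕ)))
        then (1:ℤ) else 0) • alt (fun i => μ i + (k-1-(i:ℕ))))
      = ∑ μ ∈ ((Fintype.piFinset fun _ : Fin k => Finset.range (lam ⟨0,hk⟩ + m + 1)).filter
        (fun μ : Fin k → ℕ => Antitone μ ∧ ∑ i, μ i = (∑ i, lam i) + m)).filter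
        (fun μ => (∀ i, (lam i + (k-1-(i:ℕ))) ≤ μ i + (k-1-(i:ℕ))) ∧
            (∀ i j : Fin k, (j:ℕ) = (i:ℕ)+1 → μ j + (k-1-(j:ℕ)) < lam i + (k-1-(i:ℕ)))),
        alt (fun i => μ i + (k-1-(i:ℕ))) := by
    symm
    rw [Finset.sum_filter]
    apply Finset.sum_congr rfl
    intro μ _
    rw [ite_smul, one_smul, zero_smul]
  rw [h3]
  have h4 : ((Fintype.piFinset fun _ : Fin k => Finset.range (lam ⟨0,hk⟩ + m + 1)).filter
        (fun μ : Fin k → ℕ => Antitone μ ∧ ∑ i, μ i = (∑ i, lam i) + m)).filter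
        (fun μ => (∀ i, (lam i + (k-1-(i:ℕ))) ≤ μ i + (k-1-(i:ℕ))) ∧
            (∀ i j : Fin k, (j:ℕ) = (i:ℕ)+1 → μ j + (k-1-(j:ℕ)) < lam i + (k-1-(i:ℕ))))
      = (Fintype.piFinset fun _ : Fin k => Finset.range (lam ⟨0, hk⟩ + m + 1)).filter
          (fun μ : Fin k → ℕ => Antitone μ ∧
            (∀ i, lam i ≤ μ i) ∧
            (∀ i j : Fin k, (j : ℕ) = (i : ℕ) + 1 → μ j ≤ lam i) ∧
            (∑ i : Fin k, (μ i - lam i)) = m) := by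
    ext μ
    simp only [Finset.mem_filter, Fintype.mem_piFinset, Finset.mem_range]
    constructor
    · rintro ⟨⟨hbox, hanti, hsum⟩, hle, hsucc⟩
      have hle' : ∀ i, lam i ≤ μ i := fun i => by have := hle i; omega
      refine ⟨hbox, hanti, hle', fun i j hij => ?_, ?_⟩
      · have := hsucc i j hij
        have := j.isLt
        omega
      · have hsplit : ∑ i : Fin k, μ i = ∑ i : Fin k, ((μ i - lam i) + lam i) :=
          Finset.sum_congr rfl fun i _ => by have := hle' i; omega
        rw [Finset.sum_add_distrib] at hsplit
        omega
    · rintro ⟨hbox, hanti, hle, hsucc, hsum⟩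
      have hsplit : ∑ i : Fin k, μ i = ∑ i : Fin k, ((μ i - lam i) + lam i) :=
        Finset.sum_congr rfl fun i _ => by have := hle i; omega
      rw [Finset.sum_add_distrib] at hsplit
      refine ⟨⟨hbox, hanti, by omega⟩, fun i => by have := hle i; omega, fun i j hij => ?_⟩
      have := hsucc i j hij
      have := j.isLt
      omega
  rw [h4]
  exact Finset.sum_congr rfl fun μ _ => rfl
end
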